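/- Let R be the stationary solution of R ≝ MR + Q with M ∈ GL(d,ℝ) a.s. Suppose the support of R (in ℝ^d) is unbounded, and define D := {y ∈ S : ∃ (x_n) ⊂ supp R with |x_n| → ∞ and x_n/|x_n| → y} (nonempty by compactness of S). If P(x_0·R ≤ t_0) = 1 for some unit vector x_0 and t_0 ∈ ℝ, then x_0·y ≤ 0 for all y ∈ D, and moreover My_0/|My_0| ∈ D a.s. for each y_0 ∈ D, whence P((x_0 M)^∼ · y_0 ≤ 0) = 1; in particular (x_0 M)^∼ avoids a neighborhood of y_0 in S almost surely. -/

import Mathlib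

open MeasureTheory Filter

instance matrixMeasurableSpace {d : ℕ} : MeasurableSpace (Matrix (Fin d) (Fin d) ℝ) :=
  inferInstanceAs (MeasurableSpace ((Fin d) → (Fin d) → ℝ))

/-- Row-vector action `x ↦ xA` of a matrix on Euclidean space. -/
noncomputable def vecMulE {d : ℕ} (x : EuclideanSpace ℝ (Fin d))
    (A : Matrix (Fin d) (Fin d) ℝ) : EuclideanSpace ℝ (Fin d) :=
  (EuclideanSpace.equiv (Fin d) ℝ).symm (Matrix.vecMul ((EuclideanSpace.equiv (Fin d) ℝ) x) A)

/-- Matrix acting on a column vector in Euclidean space. -/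
noncomputable def mulVecE {d : ℕ} (A : Matrix (Fin d) (Fin d) ℝ)
    (v : EuclideanSpace ℝ (Fin d)) : EuclideanSpace ℝ (Fin d) :=
  (EuclideanSpace.equiv (Fin d) ℝ).symm (A.mulVec ((EuclideanSpace.equiv (Fin d) ℝ) v))

/-- The support of the law of `R`. -/
def lawSupport {d : ℕ} {Ω : Type*} [MeasurableSpace Ω] (μ : Measure Ω)
    (R : Ω → EuclideanSpace ℝ (Fin d)) : Set (EuclideanSpace ℝ (Fin d)) :=
  {v | ∀ ε : ℝ, 0 < ε → 0 < μ {ω | dist (R ω) v < ε}}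

/-- The set `D` of directions along which `supp R` is unbounded. -/
def dirSet {d : ℕ} {Ω : Type*} [MeasurableSpace Ω] (μ : Measure Ω)
    (R : Ω → EuclideanSpace ℝ (Fin d)) : Set (EuclideanSpace ℝ (Fin d)) :=
  {y | ‖y‖ = 1 ∧ ∃ u : ℕ → EuclideanSpace ℝ (Fin d),
    (∀ n, u n ∈ lawSupport μ R) ∧ Tendsto (fun n => ‖u n‖) atTop atTop ∧
    Tendsto (fun n => ‖u n‖⁻¹ • u n) atTop (nhds y)}

private lemma mulVecE_smul' {d : ℕ} (A : Matrix (Fin d) (Fin d) ℝ) (c : ℝ)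
    (v : EuclideanSpace ℝ (Fin d)) : mulVecE A (c • v) = c • mulVecE A v := by
  simp [mulVecE, Matrix.mulVec_smul]

private lemma mulVecE_continuous' {d : ℕ} (A : Matrix (Fin d) (Fin d) ℝ) :
    Continuous (mulVecE A) := by
  have h : mulVecE A = ⇑(EuclideanSpace.equiv (Fin d) ℝ).symm ∘ ⇑(Matrix.mulVecLin A) ∘
      ⇑(EuclideanSpace.equiv (Fin d) ℝ) := rfl
  rw [h]
  exact (EuclideanSpace.equiv (Fin d) ℝ).symm.continuous.comp
    ((Matrix.mulVecLin A).continuous_of_finiteDimensional.comp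
      (EuclideanSpace.equiv (Fin d) ℝ).continuous)

private lemma inner_vecMulE {d : ℕ} (x y : EuclideanSpace ℝ (Fin d))
    (A : Matrix (Fin d) (Fin d) ℝ) :
    (inner ℝ (vecMulE x A) y : ℝ) = inner ℝ x (mulVecE A y) := by
  have h1 : ∀ a b : EuclideanSpace ℝ (Fin d), (inner ℝ a b : ℝ) =
      dotProduct ((EuclideanSpace.equiv (Fin d) ℝ) a)
        ((EuclideanSpace.equiv (Fin d) ℝ) b) := by
    intro a b
    simp [PiLp.inner_apply, dotProduct, RCLike.inner_apply, mul_comm]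
  rw [h1, h1]
  simp only [vecMulE, mulVecE, ContinuousLinearEquiv.apply_symm_apply]
  exact (Matrix.dotProduct_mulVec _ A _).symm

/-- If `supp R` is unbounded, `M · supp R + Q ⊂ supp R` a.s., and `P(x₀·R ≤ t₀) = 1`, then
`x₀·y ≤ 0` for all `y ∈ D`, `(My₀)^∼ ∈ D` a.s. for `y₀ ∈ D`, whence
`P((x₀M)·y₀ ≤ 0) = 1`; in particular `(x₀M)^∼` a.s. avoids a neighborhood of `y₀`. -/
theorem stmt18 {d : ℕ} (hd : 0 < d) {Ω : Type*} [MeasurableSpace Ω]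
    (μ : Measure Ω) [IsProbabilityMeasure μ]
    (M : Ω → Matrix (Fin d) (Fin d) ℝ) (hM : Measurable M)
    (Qv : Ω → EuclideanSpace ℝ (Fin d)) (hQ : Measurable Qv)
    (R : Ω → EuclideanSpace ℝ (Fin d)) (hR : Measurable R)
    (hInv : ∀ᵐ ω ∂μ, IsUnit (M ω))
    (hfix : ∀ᵐ ω ∂μ, ∀ v ∈ lawSupport μ R, mulVecE (M ω) v + Qv ω ∈ lawSupport μ R)
    (hUnb : ∀ C : ℝ, ∃ v ∈ lawSupport μ R, C < ‖v‖)
    (x₀ : EuclideanSpace ℝ (Fin d)) (hx₀ : ‖x₀‖ = 1) (t₀ : ℝ)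
    (hconc : ∀ᵐ ω ∂μ, (inner ℝ x₀ (R ω) : ℝ) ≤ t₀) :
    (∀ y ∈ dirSet μ R, (inner ℝ x₀ y : ℝ) ≤ 0) ∧
    (∀ y₀ ∈ dirSet μ R, ∀ᵐ ω ∂μ,
      ‖mulVecE (M ω) y₀‖⁻¹ • mulVecE (M ω) y₀ ∈ dirSet μ R) ∧
    (∀ y₀ ∈ dirSet μ R, ∀ᵐ ω ∂μ, (inner ℝ (vecMulE x₀ (M ω)) y₀ : ℝ) ≤ 0) ∧
    (∀ y₀ ∈ dirSet μ R, ∃ δ : ℝ, 0 < δ ∧ ∀ᵐ ω ∂μ,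
      δ ≤ dist (‖vecMulE x₀ (M ω)‖⁻¹ • vecMulE x₀ (M ω)) y₀) := by

  -- Step A: every support point v satisfies ⟨x₀, v⟩ ≤ t₀
  have hsuppA : ∀ v ∈ lawSupport μ R, (inner ℝ x₀ v : ℝ) ≤ t₀ := by
    intro v hv
    by_contra hlt
    push_neg at hlt
    have hεpos : 0 < (inner ℝ x₀ v : ℝ) - t₀ := by linarith
    have hnull : μ {ω | ¬ (inner ℝ x₀ (R ω) : ℝ) ≤ t₀} = 0 := by
      rw [← ae_iff] ; exact hconc
    have hsub : {ω | dist (R ω) v < (inner ℝ x₀ v : ℝ) - t₀} ⊆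
        {ω | ¬ (inner ℝ x₀ (R ω) : ℝ) ≤ t₀} := by
      intro ω hω
      simp only [Set.mem_setOf_eq, not_le]
      have h1 : (inner ℝ x₀ (v - R ω) : ℝ) ≤ ‖x₀‖ * ‖v - R ω‖ := real_inner_le_norm _ _
      rw [inner_sub_right, hx₀, one_mul] at h1
      have h2 : ‖v - R ω‖ < (inner ℝ x₀ v : ℝ) - t₀ := by
        rw [← dist_eq_norm, dist_comm] ; exact hω
      linarith
    have := hv _ hεpos
    rw [measure_mono_null hsub hnull] at this
    exact lt_irrefl 0 this
  -- Step B: part 1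
  have part1 : ∀ y ∈ dirSet μ R, (inner ℝ x₀ y : ℝ) ≤ 0 := by
    rintro y ⟨hy1, u, hu, hnormu, hdir⟩
    have h1 : Tendsto (fun n => (inner ℝ x₀ (‖u n‖⁻¹ • u n) : ℝ)) atTop (nhds (inner ℝ x₀ y)) :=
      Tendsto.inner tendsto_const_nhds hdir
    have h2 : Tendsto (fun n => ‖u n‖⁻¹ * t₀) atTop (nhds 0) := by
      have h3 := hnormu.inv_tendsto_atTop
      have := h3.mul_const t₀
      simpa using this
    refine le_of_tendsto_of_tendsto' h1 h2 ?_
    intro n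
    rw [real_inner_smul_right]
    exact mul_le_mul_of_nonneg_left (hsuppA _ (hu n)) (inv_nonneg.2 (norm_nonneg _))
  -- Step C: part 2
  have part2 : ∀ y₀ ∈ dirSet μ R, ∀ᵐ ω ∂μ,
      ‖mulVecE (M ω) y₀‖⁻¹ • mulVecE (M ω) y₀ ∈ dirSet μ R := by
    rintro y₀ ⟨hy1, u, hu, hnormu, hdir⟩
    filter_upwards [hInv, hfix] with ω hInvω hfixω
    set A := M ω with hA
    set z := mulVecE A y₀ with hz
    have hzne : z ≠ 0 := by
      intro hz0
      obtain ⟨B, hB⟩ := hInvω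
      have h0 : A.mulVec ((EuclideanSpace.equiv (Fin d) ℝ) y₀) = 0 := by
        have := congrArg (EuclideanSpace.equiv (Fin d) ℝ) hz0
        simpa [hz, mulVecE] using this
      have h1 : ((EuclideanSpace.equiv (Fin d) ℝ) y₀) = 0 := by
        have h2 := congrArg (fun m => Matrix.mulVec
          ((B⁻¹ : (Matrix (Fin d) (Fin d) ℝ)ˣ) : Matrix (Fin d) (Fin d) ℝ) m) h0
        simp only [Matrix.mulVec_mulVec, Matrix.mulVec_zero] at h2
        rw [← hB, Units.inv_mul, Matrix.one_mulVec] at h2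
        exact h2
      have : y₀ = 0 := by
        have := congrArg (EuclideanSpace.equiv (Fin d) ℝ).symm h1
        simpa using this
      rw [this] at hy1
      simp at hy1
    have hznorm : (0:ℝ) < ‖z‖ := norm_pos_iff.2 hzne
    set v : ℕ → EuclideanSpace ℝ (Fin d) := fun n => mulVecE A (u n) + Qv ω with hv
    have hvsupp : ∀ n, v n ∈ lawSupport μ R := fun n => hfixω _ (hu n)
    set w : ℕ → EuclideanSpace ℝ (Fin d) := fun n => ‖u n‖⁻¹ • v n with hw
    have hw_eq : ∀ n, w n = mulVecE A (‖u n‖⁻¹ • u n) + ‖u n‖⁻¹ • Qv ω := by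
      intro n
      show ‖u n‖⁻¹ • (mulVecE A (u n) + Qv ω) = _
      rw [smul_add, mulVecE_smul']
    have hwz : Tendsto w atTop (nhds z) := by
      have h1 : Tendsto (fun n => mulVecE A (‖u n‖⁻¹ • u n)) atTop (nhds z) :=
        ((mulVecE_continuous' A).tendsto y₀).comp hdir
      have h2 : Tendsto (fun n => ‖u n‖⁻¹ • Qv ω) atTop (nhds (0 : EuclideanSpace ℝ (Fin d))) := by
        have h3 := hnormu.inv_tendsto_atTop
        have := h3.smul_const (Qv ω)
        simpa using this
      have := h1.add h2
      rw [add_zero] at this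
      exact this.congr (fun n => (hw_eq n).symm)
    have hupos : ∀ᶠ n in atTop, (0:ℝ) < ‖u n‖ := hnormu.eventually_gt_atTop 0
    have hwnorm : ∀ n, 0 < ‖u n‖ → ‖w n‖ = ‖u n‖⁻¹ * ‖v n‖ := by
      intro n hn
      have hwn : w n = ‖u n‖⁻¹ • v n := rfl
      rw [hwn, norm_smul, Real.norm_eq_abs, abs_of_pos (inv_pos.2 hn)]
    have hvnorm : Tendsto (fun n => ‖v n‖) atTop atTop := by
      have h1 : Tendsto (fun n => ‖u n‖ * ‖w n‖) atTop atTop :=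
        Tendsto.atTop_mul_pos hznorm hnormu hwz.norm
      refine h1.congr' ?_
      filter_upwards [hupos] with n hn
      rw [hwnorm n hn, ← mul_assoc, mul_inv_cancel₀ hn.ne', one_mul]
    have hdir2 : Tendsto (fun n => ‖v n‖⁻¹ • v n) atTop (nhds (‖z‖⁻¹ • z)) := by
      have h1 : Tendsto (fun n => ‖w n‖⁻¹ • w n) atTop (nhds (‖z‖⁻¹ • z)) :=
        Tendsto.smul (hwz.norm.inv₀ hznorm.ne') hwz
      refine h1.congr' ?_
      filter_upwards [hupos] with n hn
      have hwn : w n = ‖u n‖⁻¹ • v n := rfl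
      rw [hwn, smul_smul, hwnorm n hn]
      congr 1
      rw [mul_inv, inv_inv]
      have h2 : ‖u n‖ * ‖v n‖⁻¹ * ‖u n‖⁻¹ = ‖v n‖⁻¹ * (‖u n‖ * ‖u n‖⁻¹) := by ring
      rw [h2, mul_inv_cancel₀ hn.ne', mul_one]
    refine ⟨?_, v, hvsupp, hvnorm, hdir2⟩
    rw [norm_smul, norm_inv, norm_norm, inv_mul_cancel₀ hznorm.ne']
  -- Step D: part 3
  have part3 : ∀ y₀ ∈ dirSet μ R, ∀ᵐ ω ∂μ, (inner ℝ (vecMulE x₀ (M ω)) y₀ : ℝ) ≤ 0 := by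
    intro y₀ hy₀
    filter_upwards [part2 y₀ hy₀] with ω h2
    rw [inner_vecMulE]
    by_cases hz : mulVecE (M ω) y₀ = 0
    · rw [hz] ; simp
    · have h1 := part1 _ h2
      rw [real_inner_smul_right] at h1
      have hpos : (0:ℝ) < ‖mulVecE (M ω) y₀‖⁻¹ := by
        rw [inv_pos] ; exact norm_pos_iff.2 hz
      nlinarith
  refine ⟨part1, part2, part3, ?_⟩
  -- Step E: part 4
  intro y₀ hy₀
  refine ⟨1, one_pos, ?_⟩
  filter_upwards [part3 y₀ hy₀] with ω h3
  set p := vecMulE x₀ (M ω) with hp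
  set w := ‖p‖⁻¹ • p with hwdef
  have hwinner : (inner ℝ w y₀ : ℝ) ≤ 0 := by
    rw [hwdef, real_inner_smul_left]
    exact mul_nonpos_of_nonneg_of_nonpos (inv_nonneg.2 (norm_nonneg _)) h3
  have hwn : ‖w‖ ≤ 1 := by
    rw [hwdef, norm_smul, norm_inv, norm_norm]
    rcases eq_or_ne ‖p‖ 0 with h | h
    · rw [h] ; simp
    · rw [inv_mul_cancel₀ h]
  have hsq := norm_sub_sq_real w y₀
  have hy1 : ‖y₀‖ = 1 := hy₀.1
  rw [dist_eq_norm]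
  nlinarith [norm_nonneg (w - y₀), sq_nonneg ‖w‖, norm_nonneg w]
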